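/- Let G: ℝ^m → ℝ be twice continuously differentiable and μ-strongly convex, and let J: ℝ^m → ℝ be twice continuously differentiable and convex. For s ≥ 0 define y(s) = argmin_{y∈ℝ^m} (sJ(y) + G(y)) (unique by strong convexity). Then s ↦ y(s) is differentiable with dy(s)/ds = −(∇²G(y(s)) + s∇²J(y(s)))^{−1} ∇J(y(s)) for all s ≥ 0; in particular dy(0)/ds = −(∇²G(y(0)))^{−1} ∇J(y(0)). -/

import Mathlib

open InnerProductSpace Set

section aux
variable {E : Type*} [NormedAddCommGroup E] [InnerProductSpace ℝ E] [CompleteSpace E]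

lemma inner_gradient_eq (f : E → ℝ) (p v : E) :
    ⟪gradient f p, v⟫_ℝ = fderiv ℝ f p v := toDual_symm_apply

omit [CompleteSpace E] in
lemma line_hasDerivAt (x v : E) (t : ℝ) : HasDerivAt (fun t : ℝ => x + t • v) v t := by
  simpa using ((hasDerivAt_id t).smul_const v).const_add x

lemma mono_hasDerivAt_nonneg {g : ℝ → ℝ} {d t : ℝ} (hm : Monotone g)
    (hd : HasDerivAt g d t) : 0 ≤ d := by
  have h := hasDerivAt_iff_tendsto_slope.mp hd
  have h' : Filter.Tendsto (slope g t) (nhdsWithin t (Ioi t)) (nhds d) :=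
    h.mono_left (nhdsWithin_mono t fun s hs => ne_of_gt hs)
  refine ge_of_tendsto h' ?_
  filter_upwards [self_mem_nhdsWithin] with s hs
  have : g t ≤ g s := hm (le_of_lt hs)
  have hst : (0:ℝ) < s - t := sub_pos.mpr hs
  rw [slope_def_field]
  exact div_nonneg (by linarith) (le_of_lt hst)

lemma grad_line_mono (f : E → ℝ) (hf : ContDiff ℝ 2 f) (c : ℝ)
    (hconv : ConvexOn ℝ Set.univ fun z => f z - c / 2 * ‖z‖ ^ 2) (x v : E) :
    Monotone (fun t : ℝ => ⟪gradient f (x + t • v), v⟫_ℝ - c * ⟪x + t • v, v⟫_ℝ) := by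
  have hdf : Differentiable ℝ f := hf.differentiable (by simp)
  set φ : ℝ → ℝ := fun t => f (x + t • v) - c / 2 * ‖x + t • v‖ ^ 2 with hφ
  have hφconv : ConvexOn ℝ Set.univ φ := by
    have := hconv.comp_affineMap (AffineMap.lineMap x (x + v) : ℝ →ᵃ[ℝ] E)
    simp only [Set.preimage_univ] at this
    convert this using 1
    any_goals rfl
    funext t
    simp only [Function.comp_apply, AffineMap.lineMap_apply, vsub_eq_sub, vadd_eq_add,
      add_sub_cancel_left, φ]
    rw [add_comm]
  set g : ℝ → ℝ := fun t => ⟪gradient f (x + t • v), v⟫_ℝ - c * ⟪x + t • v, v⟫_ℝ with hg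
  have hd : ∀ t : ℝ, HasDerivAt φ (g t) t := by
    intro t
    have hline := line_hasDerivAt x v t
    have h1 : HasDerivAt (fun t : ℝ => f (x + t • v)) (⟪gradient f (x + t • v), v⟫_ℝ) t := by
      rw [inner_gradient_eq]
      exact (hdf (x + t • v)).hasFDerivAt.comp_hasDerivAt t hline
    have h2 : HasDerivAt (fun t : ℝ => ‖x + t • v‖ ^ 2) (2 * ⟪x + t • v, v⟫_ℝ) t := by
      have := (hline.inner ℝ hline : HasDerivAt (fun t : ℝ => ⟪x + t • v, x + t • v⟫_ℝ)
        (⟪x + t • v, v⟫_ℝ + ⟪v, x + t • v⟫_ℝ) t)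
      simp only [← real_inner_self_eq_norm_sq]
      convert this using 1
      any_goals rfl
      rw [real_inner_comm v (x + t • v)]; ring
    have := h1.sub ((h2.const_mul (c / 2)))
    convert this using 1
    any_goals rfl
    simp [g]; ring
  intro a b hab
  rcases eq_or_lt_of_le hab with rfl | h
  · exact le_refl _
  · exact (hφconv.le_slope_of_hasDerivAt trivial trivial h (hd a)).trans
      (hφconv.slope_le_of_hasDerivAt trivial trivial h (hd b))

lemma grad_strong_mono (f : E → ℝ) (hf : ContDiff ℝ 2 f) (c : ℝ)
    (hconv : ConvexOn ℝ Set.univ fun z => f z - c / 2 * ‖z‖ ^ 2) (a b : E) :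
    c * ‖a - b‖ ^ 2 ≤ ⟪gradient f a - gradient f b, a - b⟫_ℝ := by
  have h := grad_line_mono f hf c hconv b (a - b) zero_le_one
  simp only [zero_smul, add_zero, one_smul, add_sub_cancel] at h
  have e1 : ⟪gradient f a - gradient f b, a - b⟫_ℝ
      = ⟪gradient f a, a - b⟫_ℝ - ⟪gradient f b, a - b⟫_ℝ := inner_sub_left _ _ _
  have e2 : ⟪a, a - b⟫_ℝ - ⟪b, a - b⟫_ℝ = ‖a - b‖ ^ 2 := by
    rw [← inner_sub_left, real_inner_self_eq_norm_sq]
  rw [e1, ← e2, mul_sub]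
  linarith

lemma gradient_contDiff (f : E → ℝ) (hf : ContDiff ℝ 2 f) :
    ContDiff ℝ 1 (fun x => gradient f x) := by
  have h1 : ContDiff ℝ 1 (fderiv ℝ f) := hf.fderiv_right (by norm_num)
  have he : (fun x => gradient f x)
      = fun x => (toDual ℝ E).toContinuousLinearEquiv.symm (fderiv ℝ f x) := rfl
  rw [he]
  exact ((toDual ℝ E).toContinuousLinearEquiv.symm.contDiff).comp h1

lemma hess_lower (f : E → ℝ) (hf : ContDiff ℝ 2 f) (c : ℝ)
    (hconv : ConvexOn ℝ Set.univ fun z => f z - c / 2 * ‖z‖ ^ 2) (x v : E) :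
    c * ‖v‖ ^ 2 ≤ ⟪(fderiv ℝ (fun w => gradient f w) x) v, v⟫_ℝ := by
  have hgrad := gradient_contDiff f hf
  set D := fderiv ℝ (fun w => gradient f w) x with hD
  have hu : HasDerivAt (fun t : ℝ => gradient f (x + t • v)) (D v) 0 := by
    have h0 : x + (0:ℝ) • v = x := by simp
    have hfd : HasFDerivAt (fun w => gradient f w) D (x + (0:ℝ) • v) := by
      rw [h0]
      exact ((hgrad.differentiable one_ne_zero) x).hasFDerivAt
    exact hfd.comp_hasDerivAt 0 (line_hasDerivAt x v 0)
  have h1 : HasDerivAt (fun t : ℝ => ⟪gradient f (x + t • v), v⟫_ℝ) (⟪D v, v⟫_ℝ) 0 := by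
    have := hu.inner ℝ (hasDerivAt_const (0:ℝ) v)
    simpa using this
  have h2 : HasDerivAt (fun t : ℝ => ⟪x + t • v, v⟫_ℝ) (⟪v, v⟫_ℝ) 0 := by
    have := (line_hasDerivAt x v 0).inner ℝ (hasDerivAt_const (0:ℝ) v)
    simpa using this
  have hder : HasDerivAt (fun t : ℝ => ⟪gradient f (x + t • v), v⟫_ℝ - c * ⟪x + t • v, v⟫_ℝ)
      (⟪D v, v⟫_ℝ - c * ⟪v, v⟫_ℝ) 0 := h1.sub (h2.const_mul c)
  have hmono := grad_line_mono f hf c hconv x v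
  have := mono_hasDerivAt_nonneg hmono hder
  rw [real_inner_self_eq_norm_sq] at this
  linarith


end aux

lemma gradient_combo {E : Type*} [NormedAddCommGroup E] [InnerProductSpace ℝ E] [CompleteSpace E]
    (s : ℝ) (J G : E → ℝ) (hJ : Differentiable ℝ J) (hG : Differentiable ℝ G) (w : E) :
    gradient (fun z => s * J z + G z) w = s • gradient J w + gradient G w := by
  have he : ∀ g : E → ℝ, gradient g w
      = (InnerProductSpace.toDual ℝ E).toContinuousLinearEquiv.symm (fderiv ℝ g w) :=
    fun g => rfl
  rw [he, he, he, fderiv_fun_add ((hJ w).const_mul s) (hG w), fderiv_const_mul (hJ w) s,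
    map_add, map_smul]

theorem aux_main {E : Type*} [NormedAddCommGroup E] [InnerProductSpace ℝ E]
    [CompleteSpace E] [FiniteDimensional ℝ E] (μ : ℝ) (hμ : 0 < μ)
    (G J : E → ℝ)
    (hG : ContDiff ℝ 2 G) (hJ : ContDiff ℝ 2 J)
    (hGsc : StrongConvexOn Set.univ μ G)
    (hJconv : ConvexOn ℝ Set.univ J)
    (y : ℝ → E)
    (hy : ∀ s : ℝ, 0 ≤ s → ∀ z, s * J (y s) + G (y s) ≤ s * J z + G z) :
    ∀ s : ℝ, 0 ≤ s → ∃ d : E,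
      HasDerivWithinAt y d (Set.Ici (0 : ℝ)) s ∧
      (fderiv ℝ (fun w => gradient G w) (y s)
          + s • fderiv ℝ (fun w => gradient J w) (y s)) d = -gradient J (y s) := by
  intro s₀ hs₀
  have hGc : ConvexOn ℝ Set.univ fun z : E => G z - μ / 2 * ‖z‖ ^ 2 :=
    strongConvexOn_iff_convex.mp hGsc
  have hJc : ConvexOn ℝ Set.univ fun z : E => J z - (0:ℝ) / 2 * ‖z‖ ^ 2 := by
    simpa using hJconv
  have hdJ : Differentiable ℝ J := hJ.differentiable (by simp)
  have hdG : Differentiable ℝ G := hG.differentiable (by simp)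
  have hgJ : ContDiff ℝ 1 (fun w : E => gradient J w) := gradient_contDiff J hJ
  have hgG : ContDiff ℝ 1 (fun w : E => gradient G w) := gradient_contDiff G hG
  -- first-order optimality condition
  have foc : ∀ s : ℝ, 0 ≤ s → s • gradient J (y s) + gradient G (y s) = 0 := by
    intro s hs
    have hloc : IsLocalMin (fun z : E => s * J z + G z) (y s) :=
      Filter.Eventually.of_forall (hy s hs)
    have hfd : fderiv ℝ (fun z : E => s * J z + G z) (y s) = 0 := hloc.fderiv_eq_zero
    have h := gradient_combo s J G hdJ hdG (y s)
    rw [gradient, hfd, map_zero] at h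
    exact h.symm
  set x₀ := y s₀ with hx₀
  set DG := fderiv ℝ (fun w : E => gradient G w) x₀ with hDG
  set DJ := fderiv ℝ (fun w : E => gradient J w) x₀ with hDJ
  set H : E →L[ℝ] E := DG + s₀ • DJ with hH
  have Hpos : ∀ v : E, μ * ‖v‖ ^ 2 ≤ ⟪H v, v⟫_ℝ := by
    intro v
    have h1 := hess_lower G hG μ hGc x₀ v
    have h2 := hess_lower J hJ 0 hJc x₀ v
    have hJnn : (0:ℝ) ≤ ⟪DJ v, v⟫_ℝ := by simpa using h2
    have hsJ : (0:ℝ) ≤ s₀ * ⟪DJ v, v⟫_ℝ := mul_nonneg hs₀ hJnn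
    have happ : H v = DG v + s₀ • DJ v := by
      rw [hH]
      simp [ContinuousLinearMap.add_apply, ContinuousLinearMap.smul_apply]
    rw [happ, inner_add_left, real_inner_smul_left]
    linarith
  have Hinj0 : ∀ v : E, H v = 0 → v = 0 := by
    intro v hv
    have h := Hpos v
    rw [hv, inner_zero_left] at h
    have hx : ‖v‖ ^ 2 ≤ 0 := le_of_mul_le_mul_left (by simpa using h) hμ
    have h2 : ‖v‖ ^ 2 = 0 := le_antisymm hx (sq_nonneg _)
    exact norm_eq_zero.mp ((pow_eq_zero_iff two_ne_zero).mp h2)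
  have hinj : Function.Injective (H : E →ₗ[ℝ] E) := by
    intro a b hab
    have hab' : H a = H b := hab
    have h0 : H (a - b) = 0 := by rw [map_sub, hab', sub_self]
    exact sub_eq_zero.mp (Hinj0 _ h0)
  have hsurj : Function.Surjective (H : E →ₗ[ℝ] E) :=
    LinearMap.injective_iff_surjective.mp hinj
  set Heq : E ≃L[ℝ] E :=
    LinearEquiv.toContinuousLinearEquiv (LinearEquiv.ofBijective (H : E →ₗ[ℝ] E) ⟨hinj, hsurj⟩)
    with hHeq
  have Heq_apply : ∀ v : E, Heq v = H v := fun v => rfl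
  set gJ0 : E := gradient J x₀ with hgJ0
  set Aclm : (ℝ × E) →L[ℝ] (ℝ × E) := (ContinuousLinearMap.fst ℝ ℝ E).prod
      (((ContinuousLinearMap.fst ℝ ℝ E).smulRight gJ0)
        + H.comp (ContinuousLinearMap.snd ℝ ℝ E)) with hAclm
  set Bclm : (ℝ × E) →L[ℝ] (ℝ × E) := (ContinuousLinearMap.fst ℝ ℝ E).prod
      ((Heq.symm : E →L[ℝ] E).comp ((ContinuousLinearMap.snd ℝ ℝ E)
        - (ContinuousLinearMap.fst ℝ ℝ E).smulRight gJ0)) with hBclm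
  have hBA : ∀ p : ℝ × E, Bclm (Aclm p) = p := by
    rintro ⟨t, v⟩
    simp only [hAclm, hBclm, ContinuousLinearMap.prod_apply, ContinuousLinearMap.coe_fst',
      ContinuousLinearMap.coe_snd', ContinuousLinearMap.comp_apply,
      ContinuousLinearMap.sub_apply, ContinuousLinearMap.add_apply,
      ContinuousLinearMap.smulRight_apply, ContinuousLinearMap.coe_coe]
    refine Prod.ext rfl ?_
    show Heq.symm (t • gJ0 + H v - t • gJ0) = v
    rw [add_sub_cancel_left, ← Heq_apply, ContinuousLinearEquiv.symm_apply_apply]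
  have hAB : ∀ p : ℝ × E, Aclm (Bclm p) = p := by
    rintro ⟨t, w⟩
    simp only [hAclm, hBclm, ContinuousLinearMap.prod_apply, ContinuousLinearMap.coe_fst',
      ContinuousLinearMap.coe_snd', ContinuousLinearMap.comp_apply,
      ContinuousLinearMap.sub_apply, ContinuousLinearMap.add_apply,
      ContinuousLinearMap.smulRight_apply, ContinuousLinearMap.coe_coe]
    refine Prod.ext rfl ?_
    show t • gJ0 + H (Heq.symm (w - t • gJ0)) = w
    have hinv : H (Heq.symm (w - t • gJ0)) = w - t • gJ0 := by
      rw [← Heq_apply, Heq.apply_symm_apply]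
    rw [hinv]
    abel
  set A : (ℝ × E) ≃L[ℝ] (ℝ × E) := ContinuousLinearEquiv.equivOfInverse Aclm Bclm hBA hAB
    with hA
  set Φ : ℝ × E → ℝ × E := fun p => (p.1, p.1 • gradient J p.2 + gradient G p.2) with hΦ
  have hΦd : HasStrictFDerivAt Φ (A : (ℝ × E) →L[ℝ] (ℝ × E)) (s₀, x₀) := by
    have hfst : HasStrictFDerivAt (fun p : ℝ × E => p.1)
        (ContinuousLinearMap.fst ℝ ℝ E) (s₀, x₀) :=
      (ContinuousLinearMap.fst ℝ ℝ E).hasStrictFDerivAt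
    have hsnd : HasStrictFDerivAt (fun p : ℝ × E => p.2)
        (ContinuousLinearMap.snd ℝ ℝ E) (s₀, x₀) :=
      (ContinuousLinearMap.snd ℝ ℝ E).hasStrictFDerivAt
    have h2 : HasStrictFDerivAt (fun p : ℝ × E => gradient J p.2)
        (DJ.comp (ContinuousLinearMap.snd ℝ ℝ E)) (s₀, x₀) :=
      (hgJ.hasStrictFDerivAt one_ne_zero).comp _ hsnd
    have h3 : HasStrictFDerivAt (fun p : ℝ × E => gradient G p.2)
        (DG.comp (ContinuousLinearMap.snd ℝ ℝ E)) (s₀, x₀) :=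
      (hgG.hasStrictFDerivAt one_ne_zero).comp _ hsnd
    have h4 := (hfst.smul h2).add h3
    have h5 := hfst.prodMk h4
    have hEq : (ContinuousLinearMap.fst ℝ ℝ E).prod
        ((((s₀, x₀) : ℝ × E).1 • DJ.comp (ContinuousLinearMap.snd ℝ ℝ E)
          + (ContinuousLinearMap.fst ℝ ℝ E).smulRight (gradient J (((s₀, x₀) : ℝ × E).2)))
          + DG.comp (ContinuousLinearMap.snd ℝ ℝ E))
        = (A : (ℝ × E) →L[ℝ] (ℝ × E)) := by
      apply ContinuousLinearMap.ext
      rintro ⟨t, v⟩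
      have hAap : (A : (ℝ × E) →L[ℝ] (ℝ × E)) (t, v) = Aclm (t, v) := rfl
      rw [hAap]
      simp only [hAclm, hH, ContinuousLinearMap.prod_apply, ContinuousLinearMap.coe_fst',
        ContinuousLinearMap.coe_snd', ContinuousLinearMap.comp_apply,
        ContinuousLinearMap.add_apply, ContinuousLinearMap.smul_apply,
        ContinuousLinearMap.smulRight_apply]
      refine Prod.ext rfl ?_
      show s₀ • DJ v + t • gradient J x₀ + DG v = t • gJ0 + (DG v + s₀ • DJ v)
      rw [hgJ0]
      abel
    rw [← hEq]
    exact h5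
  -- continuity of the path
  have ybound : ∀ s : ℝ, 0 ≤ s → ‖y s - x₀‖ ≤ |s - s₀| * (‖gJ0‖ / μ) := by
    intro s hs
    have key := grad_strong_mono G hG μ hGc (y s) x₀
    have key2' := grad_strong_mono J hJ 0 hJc (y s) x₀
    have key2 : (0:ℝ) ≤ ⟪gradient J (y s) - gradient J x₀, y s - x₀⟫_ℝ := by
      simpa using key2'
    have e1 : gradient G (y s) = -(s • gradient J (y s)) :=
      eq_neg_of_add_eq_zero_right (foc s hs)
    have e2 : gradient G x₀ = -(s₀ • gradient J x₀) :=
      eq_neg_of_add_eq_zero_right (foc s₀ hs₀)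
    have expand : ⟪gradient G (y s) - gradient G x₀, y s - x₀⟫_ℝ
        = -(s * ⟪gradient J (y s) - gradient J x₀, y s - x₀⟫_ℝ)
          + (s₀ - s) * ⟪gradient J x₀, y s - x₀⟫_ℝ := by
      rw [e1, e2, inner_sub_left]
      simp only [inner_neg_left, real_inner_smul_left, inner_sub_left]
      ring
    have hCS : (s₀ - s) * ⟪gradient J x₀, y s - x₀⟫_ℝ
        ≤ |s - s₀| * (‖gJ0‖ * ‖y s - x₀‖) := by
      calc (s₀ - s) * ⟪gradient J x₀, y s - x₀⟫_ℝ
          ≤ |(s₀ - s) * ⟪gradient J x₀, y s - x₀⟫_ℝ| := le_abs_self _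
        _ = |s₀ - s| * |⟪gradient J x₀, y s - x₀⟫_ℝ| := abs_mul _ _
        _ ≤ |s₀ - s| * (‖gradient J x₀‖ * ‖y s - x₀‖) := by
            exact mul_le_mul_of_nonneg_left (abs_real_inner_le_norm _ _) (abs_nonneg _)
        _ = |s - s₀| * (‖gJ0‖ * ‖y s - x₀‖) := by rw [abs_sub_comm, hgJ0]
    have hsK : (0:ℝ) ≤ s * ⟪gradient J (y s) - gradient J x₀, y s - x₀⟫_ℝ :=
      mul_nonneg hs key2
    have hmain : μ * ‖y s - x₀‖ ^ 2 ≤ |s - s₀| * (‖gJ0‖ * ‖y s - x₀‖) := by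
      rw [expand] at key
      linarith
    rcases eq_or_lt_of_le (norm_nonneg (y s - x₀)) with h0 | hpos
    · rw [← h0]
      positivity
    · have h1 : μ * ‖y s - x₀‖ ≤ |s - s₀| * ‖gJ0‖ := by
        have h2 : μ * ‖y s - x₀‖ * ‖y s - x₀‖ ≤ |s - s₀| * ‖gJ0‖ * ‖y s - x₀‖ := by
          nlinarith [hmain]
        exact le_of_mul_le_mul_right h2 hpos
      rw [mul_div_assoc']
      rw [le_div_iff₀ hμ]
      linarith
  have ycont : Filter.Tendsto y (nhdsWithin s₀ (Set.Ici 0)) (nhds x₀) := by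
    rw [tendsto_iff_norm_sub_tendsto_zero]
    have hb : Filter.Tendsto (fun s : ℝ => |s - s₀| * (‖gJ0‖ / μ))
        (nhdsWithin s₀ (Set.Ici 0)) (nhds 0) := by
      have hc : Continuous fun s : ℝ => |s - s₀| * (‖gJ0‖ / μ) :=
        ((continuous_id.sub continuous_const).abs).mul continuous_const
      have ht := hc.tendsto s₀
      simp only [sub_self, abs_zero, zero_mul] at ht
      exact ht.mono_left nhdsWithin_le_nhds
    refine squeeze_zero' ?_ ?_ hb
    · filter_upwards with s using norm_nonneg _
    · filter_upwards [self_mem_nhdsWithin] with s hs using ybound s hs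
  set ψ := hΦd.localInverse Φ A (s₀, x₀) with hψ
  have hΦ0 : Φ (s₀, x₀) = ((s₀ : ℝ), (0:E)) := Prod.ext rfl (foc s₀ hs₀)
  have hψd : HasStrictFDerivAt ψ (A.symm : (ℝ × E) →L[ℝ] (ℝ × E)) ((s₀ : ℝ), (0:E)) := by
    have h := hΦd.to_localInverse
    rwa [hΦ0] at h
  have hcurve : HasDerivAt (fun s : ℝ => ψ (s, (0:E))) (A.symm ((1:ℝ), (0:E))) s₀ := by
    have hline : HasDerivAt (fun s : ℝ => ((s, (0:E)) : ℝ × E)) ((1:ℝ), (0:E)) s₀ :=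
      (hasDerivAt_id s₀).prodMk (hasDerivAt_const s₀ (0:E))
    exact hψd.hasFDerivAt.comp_hasDerivAt s₀ hline
  refine ⟨(A.symm ((1:ℝ), (0:E))).2, ?_, ?_⟩
  · have hc2 : HasDerivAt (fun s : ℝ => (ψ (s, (0:E))).2) (A.symm ((1:ℝ), (0:E))).2 s₀ := by
      have h := (ContinuousLinearMap.snd ℝ ℝ E).hasFDerivAt.comp_hasDerivAt s₀ hcurve
      simpa [Function.comp_def] using h
    have htend : Filter.Tendsto (fun s : ℝ => ((s, y s) : ℝ × E))
        (nhdsWithin s₀ (Set.Ici 0)) (nhds ((s₀ : ℝ), x₀)) :=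
      (Filter.tendsto_id.mono_left nhdsWithin_le_nhds).prodMk_nhds ycont
    have hev : y =ᶠ[nhdsWithin s₀ (Set.Ici 0)] fun s => (ψ (s, (0:E))).2 := by
      filter_upwards [htend.eventually hΦd.eventually_left_inverse, self_mem_nhdsWithin]
        with s h1 h2
      have hΦs : Φ (s, y s) = ((s : ℝ), (0:E)) := Prod.ext rfl (foc s h2)
      rw [hΦs] at h1
      exact (congrArg Prod.snd h1).symm
    have hev0 : y s₀ = (ψ ((s₀ : ℝ), (0:E))).2 := by
      have h1 : ψ (Φ (s₀, x₀)) = ((s₀ : ℝ), x₀) := hΦd.localInverse_apply_image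
      rw [hΦ0] at h1
      exact (congrArg Prod.snd h1).symm
    exact (hc2.hasDerivWithinAt).congr_of_eventuallyEq hev hev0
  · have hq : Aclm (A.symm ((1:ℝ), (0:E))) = ((1:ℝ), (0:E)) := A.apply_symm_apply _
    set q := A.symm ((1:ℝ), (0:E)) with hqdef
    have hq2 : Aclm q = ((1:ℝ), (0:E)) := hq
    have hcomp : (q.1, q.1 • gJ0 + H q.2) = ((1:ℝ), (0:E)) := by
      rw [← hq2]
      simp only [hAclm, ContinuousLinearMap.prod_apply, ContinuousLinearMap.coe_fst',
        ContinuousLinearMap.coe_snd', ContinuousLinearMap.comp_apply,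
        ContinuousLinearMap.add_apply, ContinuousLinearMap.smulRight_apply]
    have h1 : q.1 = 1 := congrArg Prod.fst hcomp
    have h2 : q.1 • gJ0 + H q.2 = 0 := congrArg Prod.snd hcomp
    rw [h1, one_smul] at h2
    show H q.2 = -gradient J x₀
    rw [← hgJ0]
    exact eq_neg_of_add_eq_zero_right h2

/-- differentiability of the Tikhonov-type perturbation path.
`G` is twice continuously differentiable and `μ`-strongly convex, `J` is twice
continuously differentiable and convex, and for `s ≥ 0`, `y(s)` is the unique
minimizer of `sJ + G`.  Then `s ↦ y(s)` is differentiable (within `[0,∞)`) with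
`dy(s)/ds = −(∇²G(y(s)) + s∇²J(y(s)))⁻¹ ∇J(y(s))`, i.e. its derivative `d`
satisfies `(∇²G(y(s)) + s∇²J(y(s))) d = −∇J(y(s))`; in particular at `s = 0`
the derivative `d` satisfies `∇²G(y(0)) d = −∇J(y(0))`. -/
theorem perturbation_path_derivative (m : ℕ) (μ : ℝ) (hμ : 0 < μ)
    (G J : EuclideanSpace ℝ (Fin m) → ℝ)
    (hG : ContDiff ℝ 2 G) (hJ : ContDiff ℝ 2 J)
    (hGsc : StrongConvexOn Set.univ μ G)
    (hJconv : ConvexOn ℝ Set.univ J)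
    (y : ℝ → EuclideanSpace ℝ (Fin m))
    (hy : ∀ s : ℝ, 0 ≤ s → ∀ z, s * J (y s) + G (y s) ≤ s * J z + G z) :
    ∀ s : ℝ, 0 ≤ s → ∃ d : EuclideanSpace ℝ (Fin m),
      HasDerivWithinAt y d (Set.Ici (0 : ℝ)) s ∧
      (fderiv ℝ (fun w => gradient G w) (y s)
          + s • fderiv ℝ (fun w => gradient J w) (y s)) d = -gradient J (y s) :=
  aux_main μ hμ G J hG hJ hGsc hJconv y hy
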